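/- For every non-degenerate model with small steps and zero drift and every n ≥ 1, the real vector space ℋ_n of discrete polyharmonic functions of degree n in the quarter plane is isomorphic, as a real vector space, to the n-fold product (ℋ_1)^n of the space of discrete harmonic functions. -/

import Mathlib

open Finset

def SmallStepGrid : Finset (ℤ × ℤ) := ({-1, 0, 1} : Finset ℤ) ×ˢ ({-1, 0, 1} : Finset ℤ)

structure SmallStepModel where
  p : ℤ → ℤ → ℝ
  nonneg : ∀ u v, 0 ≤ p u v
  supp : ∀ u v, p u v ≠ 0 → ((u, v) ∈ SmallStepGrid ∧ (u, v) ≠ (0, 0))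
  sum_one : ∑ uv ∈ SmallStepGrid, p uv.1 uv.2 = 1

def SmallStepModel.ZeroDrift (M : SmallStepModel) : Prop :=
  (∑ uv ∈ SmallStepGrid, (uv.1 : ℝ) * M.p uv.1 uv.2 = 0) ∧
  (∑ uv ∈ SmallStepGrid, (uv.2 : ℝ) * M.p uv.1 uv.2 = 0)

def SmallStepModel.cyc (M : SmallStepModel) : Fin 8 → ℝ :=
  ![M.p 1 1, M.p 1 0, M.p 1 (-1), M.p 0 (-1), M.p (-1) (-1), M.p (-1) 0, M.p (-1) 1,
    M.p 0 1]

def SmallStepModel.NonDegenerate (M : SmallStepModel) : Prop :=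
  ∀ k : Fin 8, ¬(M.cyc k = 0 ∧ M.cyc (k + 1) = 0 ∧ M.cyc (k + 2) = 0)

/-- The discrete Laplacian `Δ̃`: on the interior `V° = {(i,j) : i ≥ 1, j ≥ 1}` of the quarter
plane (points of `ℤ²` outside `V°` playing the role of `∂V` and carrying the value `0`),
`Δ̃f(i,j) = Σ_{(u,v)} p_{u,v} f(i+u, j+v) − f(i,j)`, and `Δ̃f = 0` off `V°`. -/
def lapFun (M : SmallStepModel) (f : ℤ × ℤ → ℝ) : ℤ × ℤ → ℝ :=
  fun z =>
    if 1 ≤ z.1 ∧ 1 ≤ z.2 then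
      (∑ uv ∈ SmallStepGrid, M.p uv.1 uv.2 * f (z.1 + uv.1, z.2 + uv.2)) - f z
    else 0

/-- `Δ̃` as a linear endomorphism of the space of functions on `ℤ²`. -/
noncomputable def lapT (M : SmallStepModel) : (ℤ × ℤ → ℝ) →ₗ[ℝ] (ℤ × ℤ → ℝ) where
  toFun := lapFun M
  map_add' f g := by
    funext z
    simp only [lapFun, Pi.add_apply]
    split
    · simp only [mul_add, Finset.sum_add_distrib]; ring
    · simp
  map_smul' c f := by
    funext z
    simp only [lapFun, Pi.smul_apply, smul_eq_mul, RingHom.id_apply]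
    split
    · rw [mul_sub, Finset.mul_sum]
      congr 1
      exact Finset.sum_congr rfl fun uv _ => by ring
    · simp

/-- The subspace of functions vanishing outside the interior of the quarter plane,
i.e. vanishing on `∂V` (and outside `V`). -/
def boundaryZero : Submodule ℝ (ℤ × ℤ → ℝ) where
  carrier := {f | ∀ z : ℤ × ℤ, ¬(1 ≤ z.1 ∧ 1 ≤ z.2) → f z = 0}
  add_mem' := fun {f g} hf hg z hz => by simp [hf z hz, hg z hz]
  zero_mem' := fun z _ => rfl
  smul_mem' := fun c f hf z hz => by simp [hf z hz]

/-- `ℋ_n`: the real vector space of discrete polyharmonic functions of degree `n` in the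
quarter plane (functions vanishing on the boundary with `Δ̃ⁿ f = 0`). -/
noncomputable def polySpace (M : SmallStepModel) (n : ℕ) : Submodule ℝ (ℤ × ℤ → ℝ) :=
  boundaryZero ⊓ LinearMap.ker ((lapT M) ^ n)


/-! ### Auxiliary lemmas -/

lemma lap_expand (M : SmallStepModel) (f : ℤ × ℤ → ℝ) (x y : ℤ) :
    ∑ uv ∈ SmallStepGrid, M.p uv.1 uv.2 * f (x + uv.1, y + uv.2) =
      M.p (-1) (-1) * f (x - 1, y - 1) + M.p (-1) 0 * f (x - 1, y)
      + M.p (-1) 1 * f (x - 1, y + 1) + M.p 0 (-1) * f (x, y - 1)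
      + M.p 0 0 * f (x, y) + M.p 0 1 * f (x, y + 1)
      + M.p 1 (-1) * f (x + 1, y - 1) + M.p 1 0 * f (x + 1, y)
      + M.p 1 1 * f (x + 1, y + 1) := by
  simp only [SmallStepGrid, Finset.sum_product, show ∀ t : ℤ, t + -1 = t - 1 from fun t => by ring,
    add_zero]
  simp [Finset.sum_insert, Finset.mem_insert]
  ring_nf

noncomputable def solveA (M : SmallStepModel) (g : ℤ × ℤ → ℝ) : ℤ × ℤ → ℝ := fun z =>
  if 2 ≤ z.1 ∧ 2 ≤ z.2 then
    (g (z.1 - 1, z.2 - 1) + solveA M g (z.1 - 1, z.2 - 1)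
      - (M.p (-1) (-1) * solveA M g (z.1 - 2, z.2 - 2)
       + M.p (-1) 0 * solveA M g (z.1 - 2, z.2 - 1)
       + M.p (-1) 1 * solveA M g (z.1 - 2, z.2)
       + M.p 0 (-1) * solveA M g (z.1 - 1, z.2 - 2)
       + M.p 0 0 * solveA M g (z.1 - 1, z.2 - 1)
       + M.p 0 1 * solveA M g (z.1 - 1, z.2)
       + M.p 1 (-1) * solveA M g (z.1, z.2 - 2)
       + M.p 1 0 * solveA M g (z.1, z.2 - 1))) / M.p 1 1
  else 0
termination_by z => (z.1 + z.2).toNat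
decreasing_by all_goals omega

lemma solveA_spec (M : SmallStepModel) (g : ℤ × ℤ → ℝ) (h11 : M.p 1 1 ≠ 0)
    (a b : ℤ) (ha : 1 ≤ a) (hb : 1 ≤ b) :
    M.p 1 1 * solveA M g (a + 1, b + 1) =
      g (a, b) + solveA M g (a, b)
      - (M.p (-1) (-1) * solveA M g (a - 1, b - 1)
       + M.p (-1) 0 * solveA M g (a - 1, b)
       + M.p (-1) 1 * solveA M g (a - 1, b + 1)
       + M.p 0 (-1) * solveA M g (a, b - 1)
       + M.p 0 0 * solveA M g (a, b)
       + M.p 0 1 * solveA M g (a, b + 1)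
       + M.p 1 (-1) * solveA M g (a + 1, b - 1)
       + M.p 1 0 * solveA M g (a + 1, b)) := by
  rw [solveA]
  rw [if_pos (by constructor <;> simp <;> omega)]
  simp only [show (a:ℤ) + 1 - 1 = a from by ring, show (b:ℤ) + 1 - 1 = b from by ring,
    show (a:ℤ) + 1 - 2 = a - 1 from by ring, show (b:ℤ) + 1 - 2 = b - 1 from by ring]
  rw [mul_div_cancel₀ _ h11]

lemma solveA_boundary (M : SmallStepModel) (g : ℤ × ℤ → ℝ) : solveA M g ∈ boundaryZero := by
  intro z hz
  rw [solveA, if_neg (by omega)]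

lemma lap_solveA (M : SmallStepModel) (g : ℤ × ℤ → ℝ)
    (hg : g ∈ boundaryZero) (h11 : M.p 1 1 ≠ 0) :
    lapFun M (solveA M g) = g := by
  funext z
  rw [lapFun]
  split
  case isTrue h =>
    rw [lap_expand]
    linear_combination solveA_spec M g h11 z.1 z.2 h.1 h.2
  case isFalse h => exact (hg z h).symm

noncomputable def solveB (M : SmallStepModel) (g : ℤ × ℤ → ℝ) : ℤ × ℤ → ℝ := fun z =>
  if 2 ≤ z.1 ∧ 1 ≤ z.2 then
    (g (z.1 - 1, z.2) + solveB M g (z.1 - 1, z.2)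
      - (M.p (-1) (-1) * solveB M g (z.1 - 2, z.2 - 1)
       + M.p (-1) 0 * solveB M g (z.1 - 2, z.2)
       + M.p (-1) 1 * solveB M g (z.1 - 2, z.2 + 1)
       + M.p 0 (-1) * solveB M g (z.1 - 1, z.2 - 1)
       + M.p 0 0 * solveB M g (z.1 - 1, z.2)
       + M.p 0 1 * solveB M g (z.1 - 1, z.2 + 1)
       + M.p 1 (-1) * solveB M g (z.1, z.2 - 1))) / M.p 1 0
  else 0
termination_by z => ((z.1 + z.2).toNat, z.1.toNat)
decreasing_by all_goals (simp [Prod.lex_iff]; omega)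

lemma solveB_spec (M : SmallStepModel) (g : ℤ × ℤ → ℝ) (h10 : M.p 1 0 ≠ 0)
    (a b : ℤ) (ha : 1 ≤ a) (hb : 1 ≤ b) :
    M.p 1 0 * solveB M g (a + 1, b) =
      g (a, b) + solveB M g (a, b)
      - (M.p (-1) (-1) * solveB M g (a - 1, b - 1)
       + M.p (-1) 0 * solveB M g (a - 1, b)
       + M.p (-1) 1 * solveB M g (a - 1, b + 1)
       + M.p 0 (-1) * solveB M g (a, b - 1)
       + M.p 0 0 * solveB M g (a, b)
       + M.p 0 1 * solveB M g (a, b + 1)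
       + M.p 1 (-1) * solveB M g (a + 1, b - 1)) := by
  rw [solveB]
  rw [if_pos (by constructor <;> simp <;> omega)]
  simp only [show (a:ℤ) + 1 - 1 = a from by ring, show (a:ℤ) + 1 - 2 = a - 1 from by ring]
  rw [mul_div_cancel₀ _ h10]

lemma solveB_boundary (M : SmallStepModel) (g : ℤ × ℤ → ℝ) : solveB M g ∈ boundaryZero := by
  intro z hz
  rw [solveB, if_neg (by omega)]

lemma lap_solveB (M : SmallStepModel) (g : ℤ × ℤ → ℝ)
    (hg : g ∈ boundaryZero) (h11 : M.p 1 1 = 0) (h10 : M.p 1 0 ≠ 0) :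
    lapFun M (solveB M g) = g := by
  funext z
  rw [lapFun]
  split
  case isTrue h =>
    rw [lap_expand]
    linear_combination solveB_spec M g h10 z.1 z.2 h.1 h.2
      + solveB M g (z.1 + 1, z.2 + 1) * h11
  case isFalse h => exact (hg z h).symm

noncomputable def solveC (M : SmallStepModel) (g : ℤ × ℤ → ℝ) : ℤ × ℤ → ℝ := fun z =>
  if 1 ≤ z.1 ∧ 2 ≤ z.2 then
    (g (z.1, z.2 - 1) + solveC M g (z.1, z.2 - 1)
      - (M.p (-1) (-1) * solveC M g (z.1 - 1, z.2 - 2)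
       + M.p (-1) 0 * solveC M g (z.1 - 1, z.2 - 1)
       + M.p (-1) 1 * solveC M g (z.1 - 1, z.2)
       + M.p 0 (-1) * solveC M g (z.1, z.2 - 2)
       + M.p 0 0 * solveC M g (z.1, z.2 - 1)
       + M.p 1 (-1) * solveC M g (z.1 + 1, z.2 - 2))) / M.p 0 1
  else 0
termination_by z => (z.1 + z.2).toNat
decreasing_by all_goals omega

lemma solveC_spec (M : SmallStepModel) (g : ℤ × ℤ → ℝ) (h01 : M.p 0 1 ≠ 0)
    (a b : ℤ) (ha : 1 ≤ a) (hb : 1 ≤ b) :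
    M.p 0 1 * solveC M g (a, b + 1) =
      g (a, b) + solveC M g (a, b)
      - (M.p (-1) (-1) * solveC M g (a - 1, b - 1)
       + M.p (-1) 0 * solveC M g (a - 1, b)
       + M.p (-1) 1 * solveC M g (a - 1, b + 1)
       + M.p 0 (-1) * solveC M g (a, b - 1)
       + M.p 0 0 * solveC M g (a, b)
       + M.p 1 (-1) * solveC M g (a + 1, b - 1)) := by
  rw [solveC]
  rw [if_pos (by constructor <;> simp <;> omega)]
  simp only [show (b:ℤ) + 1 - 1 = b from by ring, show (b:ℤ) + 1 - 2 = b - 1 from by ring]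
  rw [mul_div_cancel₀ _ h01]

lemma solveC_boundary (M : SmallStepModel) (g : ℤ × ℤ → ℝ) : solveC M g ∈ boundaryZero := by
  intro z hz
  rw [solveC, if_neg (by omega)]

lemma lap_solveC (M : SmallStepModel) (g : ℤ × ℤ → ℝ)
    (hg : g ∈ boundaryZero) (h11 : M.p 1 1 = 0) (h10 : M.p 1 0 = 0) (h01 : M.p 0 1 ≠ 0) :
    lapFun M (solveC M g) = g := by
  funext z
  rw [lapFun]
  split
  case isTrue h =>
    rw [lap_expand]
    linear_combination solveC_spec M g h01 z.1 z.2 h.1 h.2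
      + solveC M g (z.1 + 1, z.2 + 1) * h11 + solveC M g (z.1 + 1, z.2) * h10
  case isFalse h => exact (hg z h).symm

lemma nondeg_key (M : SmallStepModel) (hnd : M.NonDegenerate) :
    M.p 1 1 ≠ 0 ∨ M.p 1 0 ≠ 0 ∨ M.p 0 1 ≠ 0 := by
  have h : ¬(M.p 0 1 = 0 ∧ M.p 1 1 = 0 ∧ M.p 1 0 = 0) := hnd 7
  tauto

lemma lap_surj (M : SmallStepModel) (hnd : M.NonDegenerate) (g : ℤ × ℤ → ℝ)
    (hg : g ∈ boundaryZero) : ∃ f ∈ boundaryZero, lapT M f = g := by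
  rcases nondeg_key M hnd with h | h | h
  · exact ⟨solveA M g, solveA_boundary M g, lap_solveA M g hg h⟩
  · by_cases h11 : M.p 1 1 = 0
    · exact ⟨solveB M g, solveB_boundary M g, lap_solveB M g hg h11 h⟩
    · exact ⟨solveA M g, solveA_boundary M g, lap_solveA M g hg h11⟩
  · by_cases h11 : M.p 1 1 = 0
    · by_cases h10 : M.p 1 0 = 0
      · exact ⟨solveC M g, solveC_boundary M g, lap_solveC M g hg h11 h10 h⟩
      · exact ⟨solveB M g, solveB_boundary M g, lap_solveB M g hg h11 h10⟩
    · exact ⟨solveA M g, solveA_boundary M g, lap_solveA M g hg h11⟩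

lemma lapT_mem_boundaryZero (M : SmallStepModel) (f : ℤ × ℤ → ℝ) :
    lapT M f ∈ boundaryZero := by
  intro z hz
  simp only [lapT, LinearMap.coe_mk, AddHom.coe_mk, lapFun, if_neg hz]

/-- `Fin (n+1) → V ≃ V × (Fin n → V)` as linear equivalence. -/
def piFinSuccLE (V : Type*) [AddCommGroup V] [Module ℝ V] (n : ℕ) :
    (Fin (n + 1) → V) ≃ₗ[ℝ] V × (Fin n → V) where
  toFun f := (f 0, fun i => f i.succ)
  invFun x := Fin.cons x.1 x.2
  left_inv f := by
    funext i
    refine Fin.cases ?_ (fun j => ?_) i <;> simp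
  right_inv x := by
    ext <;> simp
  map_add' f g := rfl
  map_smul' c f := rfl

/-- The restriction of the Laplacian, as a map `ℋ_{n+1} → ℋ_n`. -/
noncomputable def lapRes (M : SmallStepModel) (n : ℕ) :
    (polySpace M (n + 1)) →ₗ[ℝ] (polySpace M n) where
  toFun f := ⟨lapT M f.1, lapT_mem_boundaryZero M f.1, by
    have h : (lapT M ^ (n + 1)) f.1 = 0 := f.2.2
    have h2 : (lapT M ^ n) (lapT M f.1) = 0 := by
      rw [← Module.End.mul_apply, ← pow_succ]; exact h
    exact h2⟩
  map_add' f g := Subtype.ext (map_add _ _ _)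
  map_smul' c f := Subtype.ext (map_smul _ _ _)

lemma lapRes_surj (M : SmallStepModel) (hnd : M.NonDegenerate) (n : ℕ) :
    Function.Surjective (lapRes M n) := by
  rintro ⟨g, hgb, hgk⟩
  obtain ⟨f, hfb, hfl⟩ := lap_surj M hnd g hgb
  have hgk' : (lapT M ^ n) g = 0 := hgk
  have hf : (lapT M ^ (n + 1)) f = 0 := by
    rw [pow_succ, Module.End.mul_apply, hfl]; exact hgk'
  exact ⟨⟨f, hfb, hf⟩, Subtype.ext hfl⟩

/-- The kernel of `lapRes` is isomorphic to `ℋ_1`. -/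
noncomputable def kerLapResEquiv (M : SmallStepModel) (n : ℕ) :
    (LinearMap.ker (lapRes M n)) ≃ₗ[ℝ] (polySpace M 1) := by
  refine LinearEquiv.ofBijective
    { toFun := fun f => ⟨f.1.1, f.1.2.1, by
        have h : lapT M f.1.1 = 0 := congrArg Subtype.val f.2
        have h2 : (lapT M ^ 1) f.1.1 = 0 := by rw [pow_one]; exact h
        exact h2⟩
      map_add' := fun f g => rfl
      map_smul' := fun c f => rfl } ⟨?_, ?_⟩
  · intro f g h
    have h' : (f.1.1 : ℤ × ℤ → ℝ) = g.1.1 :=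
      congrArg (fun x : polySpace M 1 => (x : ℤ × ℤ → ℝ)) h
    exact Subtype.ext (Subtype.ext h')
  · rintro ⟨f, hfb, hfk⟩
    have hf1 : (lapT M ^ 1) f = 0 := hfk
    rw [pow_one] at hf1
    have hmem : (lapT M ^ (n + 1)) f = 0 := by
      rw [pow_succ, Module.End.mul_apply, hf1, map_zero]
    refine ⟨⟨⟨f, hfb, hmem⟩, ?_⟩, rfl⟩
    exact Subtype.ext hf1

lemma step_equiv (M : SmallStepModel) (hnd : M.NonDegenerate) (n : ℕ) :
    Nonempty ((polySpace M (n + 1)) ≃ₗ[ℝ] (polySpace M 1) × (polySpace M n)) := by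
  obtain ⟨q, hq⟩ := Submodule.exists_isCompl (LinearMap.ker (lapRes M n))
  have e1 : (polySpace M (n + 1)) ≃ₗ[ℝ] (LinearMap.ker (lapRes M n)) × q :=
    (Submodule.prodEquivOfIsCompl _ _ hq).symm
  have e2 : q ≃ₗ[ℝ] (polySpace M n) :=
    (Submodule.quotientEquivOfIsCompl _ _ hq).symm.trans
      ((lapRes M n).quotKerEquivOfSurjective (lapRes_surj M hnd n))
  exact ⟨e1.trans ((kerLapResEquiv M n).prodCongr e2)⟩


/-- For every non-degenerate model with small steps and zero drift and every `n ≥ 1`, the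
space `ℋ_n` of discrete polyharmonic functions of degree `n` in the quarter plane is
isomorphic, as a real vector space, to `(ℋ_1)^n`. -/
theorem polySpace_linearEquiv_pi_harmonic (M : SmallStepModel)
    (hnd : M.NonDegenerate) (hzd : M.ZeroDrift) (n : ℕ) (hn : 1 ≤ n) :
    Nonempty ((polySpace M n) ≃ₗ[ℝ] (Fin n → polySpace M 1)) := by
  induction n with
  | zero => omega
  | succ m ih =>
    rcases Nat.eq_zero_or_pos m with hm | hm
    · subst hm
      exact ⟨(LinearEquiv.funUnique (Fin 1) ℝ (polySpace M 1)).symm⟩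
    · obtain ⟨e⟩ := ih hm
      obtain ⟨s⟩ := step_equiv M hnd m
      exact ⟨(s.trans ((LinearEquiv.refl ℝ _).prodCongr e)).trans (piFinSuccLE _ m).symm⟩
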